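/- Let n ≥ 1 and p ≥ 1 be integers, and let T(i,j,k,α) (1 ≤ i,j,k ≤ n, 1 ≤ α ≤ p) be a family of real numbers that is invariant under all permutations of the indices i, j, k. Then Σ_{i,j,k,α} T(i,j,k,α)² − (1/n) Σ_{k,α} (Σ_i T(i,i,k,α))² ≥ (2(n−1)/(n(n+2))) Σ_{k,α} (Σ_i T(i,i,k,α))². -/

import Mathlib

open scoped BigOperators

private lemma core_aux (n : ℕ) (t : Fin n → Fin n → Fin n → ℝ)
    (h1 : ∀ i j k, t i j k = t j i k) (h2 : ∀ i j k, t i j k = t i k j) :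
    3 / ((n : ℝ) + 2) * ∑ k, (∑ i, t i i k) ^ 2 ≤ ∑ i, ∑ j, ∑ k, (t i j k) ^ 2 := by
  have hpos : (0:ℝ) < (n : ℝ) + 2 := by positivity
  set c : ℝ := 1 / ((n : ℝ) + 2) with hc
  set u : Fin n → ℝ := fun k => ∑ i, t i i k with hu
  set U : ℝ := ∑ k, (u k) ^ 2 with hU
  set d : Fin n → Fin n → ℝ := fun i j => if i = j then 1 else 0 with hd
  have e2 : ∑ i, ∑ j, ∑ k, (t i j k * (d i j * u k)) = U := by
    calc ∑ i, ∑ j, ∑ k, (t i j k * (d i j * u k))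
        = ∑ i, ∑ j, d i j * ∑ k, t i j k * u k := by
          refine Finset.sum_congr rfl fun i _ => Finset.sum_congr rfl fun j _ => ?_
          rw [Finset.mul_sum]
          exact Finset.sum_congr rfl fun k _ => by ring
      _ = ∑ i, ∑ k, t i i k * u k := by
          refine Finset.sum_congr rfl fun i _ => ?_
          simp [hd, ite_mul, Finset.sum_ite_eq]
      _ = ∑ k, (∑ i, t i i k) * u k := by
          rw [Finset.sum_comm]
          simp [Finset.sum_mul]
      _ = U := by simp [hU, hu, sq]
  have e3 : ∑ i, ∑ j, ∑ k, (t i j k * (d j k * u i)) = U := by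
    simp only [hd, mul_ite, ite_mul, mul_one, one_mul, mul_zero, zero_mul,
      Finset.sum_ite_eq, Finset.sum_ite_eq', Finset.mem_univ, if_true]
    have huu : ∀ i : Fin n, ∑ j, t i j j = u i := by
      intro i
      rw [hu]
      refine Finset.sum_congr rfl fun j _ => ?_
      rw [h1, h2]
    calc ∑ i, ∑ j, t i j j * u i = ∑ i, (∑ j, t i j j) * u i := by
          simp [Finset.sum_mul]
      _ = ∑ i, u i * u i := by
          refine Finset.sum_congr rfl fun i _ => by rw [huu]
      _ = U := by simp [hU, sq]
  have e4 : ∑ i, ∑ j, ∑ k, (t i j k * (d i k * u j)) = U := by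
    simp only [hd, mul_ite, ite_mul, mul_one, one_mul, mul_zero, zero_mul,
      Finset.sum_ite_eq, Finset.sum_ite_eq', Finset.mem_univ, if_true]
    have h' : ∀ i j : Fin n, t i j i = t i i j := fun i j => h2 i j i
    calc ∑ i, ∑ j, t i j i * u j = ∑ j, ∑ i, t i i j * u j := by
          rw [Finset.sum_comm]
          exact Finset.sum_congr rfl fun j _ => Finset.sum_congr rfl fun i _ => by rw [h']
      _ = ∑ j, (∑ i, t i i j) * u j := by simp [Finset.sum_mul]
      _ = U := by
          simp only [hU, sq]
          rfl
  have e5 : ∑ i : Fin n, ∑ j : Fin n, ∑ k : Fin n, (d i j * (u k) ^ 2) = (n : ℝ) * U := by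
    simp [hd, ite_mul, one_mul, Finset.sum_ite_eq, Finset.sum_ite_eq', hU]
  have e6 : ∑ i : Fin n, ∑ j : Fin n, ∑ k : Fin n, (d j k * (u i) ^ 2) = (n : ℝ) * U := by
    simp only [hd, ite_mul, one_mul, zero_mul, Finset.sum_ite_eq, Finset.sum_ite_eq',
      Finset.mem_univ, if_true, Finset.sum_const, Finset.card_univ, Fintype.card_fin,
      nsmul_eq_mul, hU, Finset.mul_sum]
  have e7 : ∑ i : Fin n, ∑ j : Fin n, ∑ k : Fin n, (d i k * (u j) ^ 2) = (n : ℝ) * U := by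
    simp only [hd, ite_mul, one_mul, zero_mul, Finset.sum_ite_eq, Finset.sum_ite_eq',
      Finset.mem_univ, if_true, hU]
    rw [Finset.sum_comm]
    simp [Finset.mul_sum]
  have e8 : ∑ i : Fin n, ∑ j : Fin n, ∑ k : Fin n,
      (d i j * (d j k * (u i * u k))) = U := by
    simp [hd, mul_ite, ite_mul, Finset.sum_ite_eq, Finset.sum_ite_eq', hU, sq]
  have e9 : ∑ i : Fin n, ∑ j : Fin n, ∑ k : Fin n,
      (d i j * (d i k * (u k * u j))) = U := by
    simp [hd, mul_ite, ite_mul, Finset.sum_ite_eq, Finset.sum_ite_eq', hU, sq]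
  have e10 : ∑ i : Fin n, ∑ j : Fin n, ∑ k : Fin n,
      (d j k * (d i k * (u i * u j))) = U := by
    simp [hd, mul_ite, ite_mul, Finset.sum_ite_eq, Finset.sum_ite_eq', hU, sq]
  -- versions with constants multiplied in
  have pull : ∀ (b : ℝ) (f : Fin n → Fin n → Fin n → ℝ) (V : ℝ),
      (∑ i, ∑ j, ∑ k, f i j k) = V →
      (∑ i, ∑ j, ∑ k, b * f i j k) = b * V := by
    intro b f V hV
    rw [← hV]
    simp [Finset.mul_sum]
  have e2' := pull (2*c) _ _ e2
  have e3' := pull (2*c) _ _ e3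
  have e4' := pull (2*c) _ _ e4
  have e5' := pull (c^2) _ _ e5
  have e6' := pull (c^2) _ _ e6
  have e7' := pull (c^2) _ _ e7
  have e8' := pull (2*c^2) _ _ e8
  have e9' := pull (2*c^2) _ _ e9
  have e10' := pull (2*c^2) _ _ e10
  have hexp : ∀ i j k : Fin n,
      (t i j k - c * (d i j * u k + d j k * u i + d i k * u j)) ^ 2
      = (t i j k) ^ 2
        - 2 * c * (t i j k * (d i j * u k))
        - 2 * c * (t i j k * (d j k * u i))
        - 2 * c * (t i j k * (d i k * u j))
        + c ^ 2 * (d i j * (u k) ^ 2)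
        + c ^ 2 * (d j k * (u i) ^ 2)
        + c ^ 2 * (d i k * (u j) ^ 2)
        + 2 * c ^ 2 * (d i j * (d j k * (u i * u k)))
        + 2 * c ^ 2 * (d i j * (d i k * (u k * u j)))
        + 2 * c ^ 2 * (d j k * (d i k * (u i * u j))) := by
    intro i j k
    simp only [hd]
    split_ifs <;> ring
  have key : ∑ i, ∑ j, ∑ k,
      (t i j k - c * (d i j * u k + d j k * u i + d i k * u j)) ^ 2
      = (∑ i, ∑ j, ∑ k, (t i j k) ^ 2) - 3 / ((n : ℝ) + 2) * U := by
    simp only [hexp]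
    simp only [Finset.sum_add_distrib, Finset.sum_sub_distrib]
    rw [e2', e3', e4', e5', e6', e7', e8', e9', e10']
    rw [hc]
    field_simp
    ring
  have hnn : 0 ≤ ∑ i, ∑ j, ∑ k,
      (t i j k - c * (d i j * u k + d j k * u i + d i k * u j)) ^ 2 := by
    refine Finset.sum_nonneg fun i _ => Finset.sum_nonneg fun j _ =>
      Finset.sum_nonneg fun k _ => sq_nonneg _
  rw [key] at hnn
  linarith

/-- `|∇h̊|² = |∇h|² − (1/n)|∇H|² ≥ (2(n−1)/(n(n+2)))|∇H|²` in pointwise algebraic form. -/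
theorem stmt_5 (n p : ℕ) (hn : 1 ≤ n) (hp : 1 ≤ p)
    (T : Fin n → Fin n → Fin n → Fin p → ℝ)
    (hsym1 : ∀ i j k α, T i j k α = T j i k α)
    (hsym2 : ∀ i j k α, T i j k α = T i k j α) :
    (2 * ((n : ℝ) - 1) / ((n : ℝ) * ((n : ℝ) + 2))) * ∑ k, ∑ α, (∑ i, T i i k α) ^ 2
      ≤ (∑ i, ∑ j, ∑ k, ∑ α, (T i j k α) ^ 2)
          - (1 / (n : ℝ)) * ∑ k, ∑ α, (∑ i, T i i k α) ^ 2 := by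
  have hn1 : (1:ℝ) ≤ (n:ℝ) := by exact_mod_cast hn
  have hn0 : (0:ℝ) < (n:ℝ) := by linarith
  have hn2 : (0:ℝ) < (n:ℝ) + 2 := by linarith
  set A : ℝ := ∑ k, ∑ α, (∑ i, T i i k α) ^ 2 with hA
  have hAnn : 0 ≤ A := by
    refine Finset.sum_nonneg fun k _ => Finset.sum_nonneg fun α _ => sq_nonneg _
  have H : ∀ α : Fin p,
      3 / ((n : ℝ) + 2) * ∑ k, (∑ i, T i i k α) ^ 2
        ≤ ∑ i, ∑ j, ∑ k, (T i j k α) ^ 2 :=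
    fun α => core_aux n (fun i j k => T i j k α)
      (fun i j k => hsym1 i j k α) (fun i j k => hsym2 i j k α)
  have Hsum : ∑ α : Fin p, 3 / ((n : ℝ) + 2) * ∑ k, (∑ i, T i i k α) ^ 2
      ≤ ∑ α : Fin p, ∑ i, ∑ j, ∑ k, (T i j k α) ^ 2 :=
    Finset.sum_le_sum fun α _ => H α
  have hswap1 : (∑ i, ∑ j, ∑ k, ∑ α, (T i j k α) ^ 2)
      = ∑ α : Fin p, ∑ i, ∑ j, ∑ k, (T i j k α) ^ 2 := by
    calc ∑ i, ∑ j, ∑ k, ∑ α, (T i j k α) ^ 2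
        = ∑ i, ∑ j, ∑ α, ∑ k, (T i j k α) ^ 2 :=
          Finset.sum_congr rfl fun i _ => Finset.sum_congr rfl fun j _ => by
            rw [Finset.sum_comm]
      _ = ∑ i, ∑ α, ∑ j, ∑ k, (T i j k α) ^ 2 :=
          Finset.sum_congr rfl fun i _ => by rw [Finset.sum_comm]
      _ = ∑ α : Fin p, ∑ i, ∑ j, ∑ k, (T i j k α) ^ 2 := by rw [Finset.sum_comm]
  have hswap2 : A = ∑ α : Fin p, ∑ k, (∑ i, T i i k α) ^ 2 := by
    rw [hA, Finset.sum_comm]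
  have hkey : 3 / ((n : ℝ) + 2) * A ≤ ∑ i, ∑ j, ∑ k, ∑ α, (T i j k α) ^ 2 := by
    rw [hswap1, hswap2, Finset.mul_sum]
    exact Hsum
  have hcoef : 2 * ((n : ℝ) - 1) / ((n : ℝ) * ((n : ℝ) + 2))
      = 3 / ((n : ℝ) + 2) - 1 / (n : ℝ) := by
    field_simp
    ring
  rw [hcoef, sub_mul]
  linarith
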